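/- arXiv:1910.13010 — 6 statements merged into one kernel-verified Lean document; each statement's English description precedes it below -/
import Mathlib

section
/- Let f : ℝⁿ → ℝ and g : ℝᵐ → ℝ be C² functions, v ≠ 0 and p, q ∈ ℝ. Suppose (θ, φ) : ℝ → ℝⁿ × ℝᵐ is a global solution of the continuous GDA dynamics θ'(t) = -v ∇f(θ(t)) (g(φ(t)) - q), φ'(t) = v ∇g(φ(t)) (f(θ(t)) - p), and γ : ℝ → ℝⁿ is a global solution of the gradient-ascent system γ'(t) = ∇f(γ(t)) with γ(0) = θ(0). Then for every t ∈ ℝ such that ∫₀ᵗ -v (g(φ(s)) - q) ds lies in ℝ we have θ(t) = γ(∫₀ᵗ -v (g(φ(s)) - q) ds). -/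
open MeasureTheory intervalIntegral

/-- Along the continuous GDA dynamics, `θ` stays on the gradient-ascent
trajectory `γ` with `γ 0 = θ 0`, reparametrized by time `∫₀ᵗ -v (g(φ s) - q) ds`. -/
theorem stmt_1 {n m : ℕ} (f : EuclideanSpace ℝ (Fin n) → ℝ)
    (g : EuclideanSpace ℝ (Fin m) → ℝ)
    (hf : ContDiff ℝ 2 f) (hg : ContDiff ℝ 2 g)
    (v p q : ℝ) (hv : v ≠ 0)
    (θ : ℝ → EuclideanSpace ℝ (Fin n)) (φ : ℝ → EuclideanSpace ℝ (Fin m))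
    (hθ : ∀ t : ℝ, HasDerivAt θ ((-(v * (g (φ t) - q))) • gradient f (θ t)) t)
    (hφ : ∀ t : ℝ, HasDerivAt φ ((v * (f (θ t) - p)) • gradient g (φ t)) t)
    (γ : ℝ → EuclideanSpace ℝ (Fin n))
    (hγ : ∀ t : ℝ, HasDerivAt γ (gradient f (γ t)) t)
    (hγ0 : γ 0 = θ 0) :
    ∀ t : ℝ, θ t = γ (∫ s in (0:ℝ)..t, -(v * (g (φ s) - q))) := by
  classical
  -- the time-rescaling factor
  set h : ℝ → ℝ := fun s => -(v * (g (φ s) - q)) with hh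
  have hφcont : Continuous φ := continuous_iff_continuousAt.mpr fun t => (hφ t).continuousAt
  have hhcont : Continuous h := by
    have := hg.continuous.comp hφcont
    continuity
  -- the reparametrized time
  set τ : ℝ → ℝ := fun t => ∫ s in (0:ℝ)..t, h s with hτdef
  have hτ : ∀ t, HasDerivAt τ (h t) t := fun t =>
    intervalIntegral.integral_hasDerivAt_right
      (hhcont.intervalIntegrable _ _)
      (hhcont.stronglyMeasurableAtFilter _ _)
      hhcont.continuousAt
  set σ : ℝ → EuclideanSpace ℝ (Fin n) := fun t => γ (τ t) with hσdef
  have hσ : ∀ t, HasDerivAt σ (h t • gradient f (σ t)) t := fun t => by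
    exact (hγ (τ t)).scomp t (hτ t)
  -- gradient f is C¹, hence locally Lipschitz
  have hgradC1 : ContDiff ℝ 1 (gradient f) := by
    have h1 : ContDiff ℝ 1 (fderiv ℝ f) := hf.fderiv_right (by norm_num)
    have : gradient f = fun x => (InnerProductSpace.toDual ℝ (EuclideanSpace ℝ (Fin n))).symm (fderiv ℝ f x) := rfl
    rw [this]
    exact (InnerProductSpace.toDual ℝ (EuclideanSpace ℝ (Fin n))).symm.contDiff.comp h1
  -- the set where θ and σ agree is clopen and nonempty
  have key : ∀ t, θ t = σ t := by
    set S : Set ℝ := {t | θ t = σ t} with hS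
    have hSclosed : IsClosed S :=
      isClosed_eq (continuous_iff_continuousAt.mpr fun t => (hθ t).continuousAt) (continuous_iff_continuousAt.mpr fun t => (hσ t).continuousAt)
    have hSopen : IsOpen S := by
      rw [isOpen_iff_mem_nhds]
      intro t₀ ht₀
      obtain ⟨K, u, hu, hK⟩ := (hgradC1.contDiffAt (x := θ t₀)).exists_lipschitzOnWith
      obtain ⟨r, hr, hball⟩ := Metric.mem_nhds_iff.mp hu
      set M : NNReal := Real.toNNReal (|h t₀| + 1) with hM
      -- eventually near t₀: |h t| ≤ M, θ t ∈ ball, σ t ∈ ball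
      have hev : ∀ᶠ t in nhds t₀, |h t| ≤ (M : ℝ) ∧ θ t ∈ Metric.ball (θ t₀) r
          ∧ σ t ∈ Metric.ball (θ t₀) r := by
        have e1 : ∀ᶠ t in nhds t₀, |h t| ≤ (M : ℝ) := by
          have hc : ContinuousAt (fun t => |h t|) t₀ := (hhcont.abs).continuousAt
          have hlt : |h t₀| < (M : ℝ) := by
            rw [hM, Real.coe_toNNReal _ (by positivity)]; linarith
          exact (hc.eventually_lt_const hlt).mono fun t ht => ht.le
        have e2 : ∀ᶠ t in nhds t₀, θ t ∈ Metric.ball (θ t₀) r :=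
          (hθ t₀).continuousAt (Metric.ball_mem_nhds _ hr)
        have e3 : ∀ᶠ t in nhds t₀, σ t ∈ Metric.ball (θ t₀) r := by
          have : σ t₀ = θ t₀ := ht₀.symm
          exact (hσ t₀).continuousAt (by rw [this]; exact Metric.ball_mem_nhds _ hr)
        exact e1.and (e2.and e3) |>.mono fun t ht => ⟨ht.1, ht.2.1, ht.2.2⟩
      obtain ⟨δ, hδ, hδh⟩ := Metric.eventually_nhds_iff.mp hev
      set s : ℝ → Set (EuclideanSpace ℝ (Fin n)) := fun t => if dist t t₀ < δ then Metric.ball (θ t₀) r else ∅ with hs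
      set V : ℝ → EuclideanSpace ℝ (Fin n) → EuclideanSpace ℝ (Fin n) := fun t x => h t • gradient f x with hV
      have hvlip : ∀ t, LipschitzOnWith (M * K) (V t) (s t) := by
        intro t
        by_cases hmem : dist t t₀ < δ
        · simp only [hs, if_pos hmem]
          rw [lipschitzOnWith_iff_dist_le_mul]
          intro x hx y hy
          have hKxy := (hK.mono hball).dist_le_mul x hx y hy
          have : dist (V t x) (V t y) = |h t| * dist (gradient f x) (gradient f y) := by
            simp [hV, dist_smul₀, Real.norm_eq_abs]
          rw [this]
          calc |h t| * dist (gradient f x) (gradient f y)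
              ≤ (M : ℝ) * ((K : ℝ) * dist x y) := by
                apply mul_le_mul (hδh hmem).1 hKxy
                  dist_nonneg M.coe_nonneg
            _ = ((M * K : NNReal) : ℝ) * dist x y := by push_cast; ring
        · simp only [hs, if_neg hmem]
          exact lipschitzOnWith_empty _ _
      have huniq := ODE_solution_unique_of_eventually (v := V) (s := s) (K := M * K) (Filter.Eventually.of_forall hvlip)
        (f := θ) (g := σ) (t₀ := t₀) ?_ ?_ ht₀
      · exact Filter.mem_of_superset huniq fun t ht => ht
      · filter_upwards [Metric.eventually_nhds_iff.mpr ⟨δ, hδ, fun {t} ht => ht⟩] with t ht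
        refine ⟨hθ t, ?_⟩
        simp only [hs, if_pos ht]
        exact (hδh ht).2.1
      · filter_upwards [Metric.eventually_nhds_iff.mpr ⟨δ, hδ, fun {t} ht => ht⟩] with t ht
        refine ⟨hσ t, ?_⟩
        simp only [hs, if_pos ht]
        exact (hδh ht).2.2
    have h0 : (0 : ℝ) ∈ S := by
      simp only [hS, Set.mem_setOf_eq, hσdef, hτdef, intervalIntegral.integral_same]
      exact hγ0.symm
    have : S = Set.univ := IsClopen.eq_univ ⟨hSclosed, hSopen⟩ ⟨0, h0⟩
    intro t; exact (Set.eq_univ_iff_forall.mp this t)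
  exact key
end

section
/- Consider the planar hidden-game dynamics: let I, J ⊆ ℝ be open intervals with p ∈ I and q ∈ J, v ≠ 0, and F, G : ℝ → ℝ continuous functions that are strictly positive on I and J respectively. Suppose f, g : ℝ → ℝ are differentiable with f(t) ∈ I, g(t) ∈ J for all t, and satisfy f'(t) = -v F(f(t)) (g(t) - q) and g'(t) = v G(g(t)) (f(t) - p). Then the energy H(f(t), g(t)) = ∫_p^{f(t)} (z - p)/F(z) dz + ∫_q^{g(t)} (z - q)/G(z) dz is constant in t. -/
open intervalIntegral

lemma prim_hasDerivAt (I : Set ℝ) (hIo : IsOpen I) (hIc : Convex ℝ I)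
    (p : ℝ) (hp : p ∈ I) (F : ℝ → ℝ) (hF : Continuous F)
    (hFpos : ∀ x ∈ I, 0 < F x) (x : ℝ) (hx : x ∈ I) :
    HasDerivAt (fun u => ∫ z in p..u, (z - p) / F z) ((x - p) / F x) x := by
  have hcont : ContinuousOn (fun z => (z - p) / F z) I :=
    ContinuousOn.div (by fun_prop) hF.continuousOn (fun z hz => (hFpos z hz).ne')
  have hsub : Set.uIcc p x ⊆ I := hIc.ordConnected.uIcc_subset hp hx
  exact intervalIntegral.integral_hasDerivAt_right
    ((hcont.mono hsub).intervalIntegrable)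
    (hcont.stronglyMeasurableAtFilter hIo x hx)
    ((hcont x hx).continuousAt (hIo.mem_nhds hx))

/-- The energy
`H(f t, g t) = ∫_p^{f t} (z-p)/F z dz + ∫_q^{g t} (z-q)/G z dz` is conserved along the
planar hidden-game dynamics. -/
theorem stmt_5 (I J : Set ℝ) (hIo : IsOpen I) (hIc : Convex ℝ I)
    (hJo : IsOpen J) (hJc : Convex ℝ J)
    (p q v : ℝ) (hp : p ∈ I) (hq : q ∈ J) (hv : v ≠ 0)
    (F G : ℝ → ℝ) (hF : Continuous F) (hG : Continuous G)
    (hFpos : ∀ x ∈ I, 0 < F x) (hGpos : ∀ y ∈ J, 0 < G y)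
    (f g : ℝ → ℝ)
    (hfI : ∀ t : ℝ, f t ∈ I) (hgJ : ∀ t : ℝ, g t ∈ J)
    (hf : ∀ t : ℝ, HasDerivAt f (-(v * F (f t) * (g t - q))) t)
    (hg : ∀ t : ℝ, HasDerivAt g (v * G (g t) * (f t - p)) t) :
    ∀ t : ℝ,
      ((∫ z in p..(f t), (z - p) / F z) + ∫ z in q..(g t), (z - q) / G z) =
      ((∫ z in p..(f 0), (z - p) / F z) + ∫ z in q..(g 0), (z - q) / G z) := by
  set E : ℝ → ℝ := fun t =>
    (∫ z in p..(f t), (z - p) / F z) + ∫ z in q..(g t), (z - q) / G z with hE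
  have hEderiv : ∀ t, HasDerivAt E 0 t := by
    intro t
    have h1 : HasDerivAt (fun t => ∫ z in p..(f t), (z - p) / F z)
        (((f t - p) / F (f t)) * (-(v * F (f t) * (g t - q)))) t :=
      (prim_hasDerivAt I hIo hIc p hp F hF hFpos (f t) (hfI t)).comp t (hf t)
    have h2 : HasDerivAt (fun t => ∫ z in q..(g t), (z - q) / G z)
        (((g t - q) / G (g t)) * (v * G (g t) * (f t - p))) t :=
      (prim_hasDerivAt J hJo hJc q hq G hG hGpos (g t) (hgJ t)).comp t (hg t)
    have hFne : F (f t) ≠ 0 := (hFpos _ (hfI t)).ne'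
    have hGne : G (g t) ≠ 0 := (hGpos _ (hgJ t)).ne'
    have := h1.add h2
    refine this.congr_deriv ?_
    linear_combination (v * (f t - p) * (g t - q)) * mul_inv_cancel₀ hGne - (v * (f t - p) * (g t - q)) * mul_inv_cancel₀ hFne
  have : ∀ s t : ℝ, E s = E t := by
    have hdiff : Differentiable ℝ E := fun t => (hEderiv t).differentiableAt
    have hzero : ∀ t, deriv E t = 0 := fun t => (hEderiv t).deriv
    exact fun s t => is_const_of_deriv_eq_zero hdiff hzero s t
  exact fun t => this t 0
end

section
/- Let u be an N×M real matrix, and let p ∈ ℝ^N, q ∈ ℝ^M with ∑_i p_i = 1 and ∑_j q_j = 1, and λ*, μ* ∈ ℝ satisfy the KKT conditions ∑_{j=1}^M u_{ij} q_j + λ* = 0 for all i and ∑_{i=1}^N u_{ij} p_i + μ* = 0 for all j. Let I_i, J_j ⊆ ℝ be open intervals with p_i ∈ I_i, q_j ∈ J_j, and F_i, G_j : ℝ → ℝ continuous and strictly positive on I_i, J_j respectively. Suppose f_i, g_j, λ, μ : ℝ → ℝ are differentiable with f_i(t) ∈ I_i, g_j(t) ∈ J_j, and satisfy f_i'(t)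 = -F_i(f_i(t)) (∑_j u_{ij} g_j(t) + λ(t)), g_j'(t) = G_j(g_j(t)) (∑_i u_{ij} f_i(t) + μ(t)), λ'(t) = ∑_i f_i(t) - 1, μ'(t) = -(∑_j g_j(t) - 1). Then the quantity H(t) = ∑_{i=1}^N ∫_{p_i}^{f_i(t)} (z - p_i)/F_i(z) dz + ∑_{j=1}^M ∫_{q_j}^{g_j(t)} (z - q_j)/G_j(z) dz + (λ(t) - λ*)²/2 + (μ(t) - μ*)²/2 is constant in t. -/
open intervalIntegral

/-- The Hamiltonian
`H = ∑_i ∫_{p_i}^{f_i} (z-p_i)/F_i + ∑_j ∫_{q_j}^{g_j} (z-q_j)/G_j + (λ-λ*)²/2 + (μ-μ*)²/2`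
is conserved along the multi-strategy hidden-game dynamics in functional form. -/
theorem stmt_11 {N M : ℕ} (u : Matrix (Fin N) (Fin M) ℝ)
    (p : Fin N → ℝ) (q : Fin M → ℝ)
    (hp : ∑ i, p i = 1) (hq : ∑ j, q j = 1)
    (lamStar muStar : ℝ)
    (hKKT1 : ∀ i, ∑ j, u i j * q j + lamStar = 0)
    (hKKT2 : ∀ j, ∑ i, u i j * p i + muStar = 0)
    (I : Fin N → Set ℝ) (J : Fin M → Set ℝ)
    (hIo : ∀ i, IsOpen (I i)) (hIc : ∀ i, Convex ℝ (I i))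
    (hJo : ∀ j, IsOpen (J j)) (hJc : ∀ j, Convex ℝ (J j))
    (hpI : ∀ i, p i ∈ I i) (hqJ : ∀ j, q j ∈ J j)
    (F : Fin N → ℝ → ℝ) (G : Fin M → ℝ → ℝ)
    (hFc : ∀ i, Continuous (F i)) (hGc : ∀ j, Continuous (G j))
    (hFpos : ∀ i, ∀ x ∈ I i, 0 < F i x) (hGpos : ∀ j, ∀ y ∈ J j, 0 < G j y)
    (f : Fin N → ℝ → ℝ) (g : Fin M → ℝ → ℝ) (lam mu : ℝ → ℝ)
    (hfI : ∀ (i : Fin N) (t : ℝ), f i t ∈ I i)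
    (hgJ : ∀ (j : Fin M) (t : ℝ), g j t ∈ J j)
    (hf : ∀ (i : Fin N) (t : ℝ),
      HasDerivAt (f i) (-(F i (f i t) * (∑ j, u i j * g j t + lam t))) t)
    (hg : ∀ (j : Fin M) (t : ℝ),
      HasDerivAt (g j) (G j (g j t) * (∑ i, u i j * f i t + mu t)) t)
    (hlam : ∀ t : ℝ, HasDerivAt lam (∑ i, f i t - 1) t)
    (hmu : ∀ t : ℝ, HasDerivAt mu (-(∑ j, g j t - 1)) t) :
    ∀ t : ℝ,
      ((∑ i, ∫ z in (p i)..(f i t), (z - p i) / F i z) +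
       (∑ j, ∫ z in (q j)..(g j t), (z - q j) / G j z) +
       (lam t - lamStar) ^ 2 / 2 + (mu t - muStar) ^ 2 / 2) =
      ((∑ i, ∫ z in (p i)..(f i 0), (z - p i) / F i z) +
       (∑ j, ∫ z in (q j)..(g j 0), (z - q j) / G j z) +
       (lam 0 - lamStar) ^ 2 / 2 + (mu 0 - muStar) ^ 2 / 2) := by

  -- Auxiliary facts
  have hlm : lamStar = muStar := by
    have h1 : ∑ i, p i * (∑ j, u i j * q j) = -lamStar := by
      have hv : ∀ i : Fin N, ∑ j, u i j * q j = -lamStar := fun i =>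
        eq_neg_of_add_eq_zero_left (hKKT1 i)
      calc ∑ i, p i * (∑ j, u i j * q j) = ∑ i, p i * (-lamStar) :=
            Finset.sum_congr rfl fun i _ => by rw [hv i]
        _ = (∑ i, p i) * (-lamStar) := by rw [Finset.sum_mul]
        _ = -lamStar := by rw [hp, one_mul]
    have h2 : ∑ i, p i * (∑ j, u i j * q j) = -muStar := by
      have hw : ∀ j : Fin M, ∑ i, u i j * p i = -muStar := fun j =>
        eq_neg_of_add_eq_zero_left (hKKT2 j)
      calc ∑ i, p i * (∑ j, u i j * q j) = ∑ i, ∑ j, p i * (u i j * q j) := by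
            simp_rw [Finset.mul_sum]
        _ = ∑ j, ∑ i, p i * (u i j * q j) := Finset.sum_comm
        _ = ∑ j, (∑ i, u i j * p i) * q j := by
            refine Finset.sum_congr rfl fun j _ => ?_
            rw [Finset.sum_mul]
            exact Finset.sum_congr rfl fun i _ => by ring
        _ = ∑ j, (-muStar) * q j := Finset.sum_congr rfl fun j _ => by rw [hw j]
        _ = (-muStar) * ∑ j, q j := by rw [Finset.mul_sum]
        _ = -muStar := by rw [hq, mul_one]
    linarith [h1, h2]
  -- the Hamiltonian
  set H : ℝ → ℝ := fun s =>
    ((∑ i, ∫ z in (p i)..(f i s), (z - p i) / F i z) +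
     (∑ j, ∫ z in (q j)..(g j s), (z - q j) / G j z) +
     (lam s - lamStar) ^ 2 / 2 + (mu s - muStar) ^ 2 / 2) with hH
  have key : ∀ s : ℝ, HasDerivAt H 0 s := by
    intro s
    -- derivative of each integral term (player 1)
    have h1 : ∀ i : Fin N, HasDerivAt (fun s => ∫ z in (p i)..(f i s), (z - p i) / F i z)
        (-((f i s - p i) * (∑ j, u i j * g j s + lam s))) s := by
      intro i
      have hcontOn : ContinuousOn (fun z => (z - p i) / F i z) (I i) :=
        (continuousOn_id.sub continuousOn_const).div (hFc i).continuousOn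
          (fun z hz => (hFpos i z hz).ne')
      have hsub : Set.uIcc (p i) (f i s) ⊆ I i :=
        (hIc i).ordConnected.uIcc_subset (hpI i) (hfI i s)
      have hint : IntervalIntegrable (fun z => (z - p i) / F i z) MeasureTheory.volume
          (p i) (f i s) := (hcontOn.mono hsub).intervalIntegrable
      have hmeas : StronglyMeasurableAtFilter (fun z => (z - p i) / F i z)
          (nhds (f i s)) :=
        ((measurable_id.sub measurable_const).div (hFc i).measurable).stronglyMeasurable.stronglyMeasurableAtFilter
      have hcont : ContinuousAt (fun z => (z - p i) / F i z) (f i s) :=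
        ContinuousAt.div (continuousAt_id.sub continuousAt_const) (hFc i).continuousAt
          (hFpos i _ (hfI i s)).ne'
      have hPhi : HasDerivAt (fun x => ∫ z in (p i)..x, (z - p i) / F i z)
          ((f i s - p i) / F i (f i s)) (f i s) :=
        intervalIntegral.integral_hasDerivAt_right hint hmeas hcont
      have hcomp := HasDerivAt.comp s hPhi (hf i s)
      refine hcomp.congr_deriv ?_
      have hFne : F i (f i s) ≠ 0 := (hFpos i _ (hfI i s)).ne'
      rw [div_mul_eq_mul_div, div_eq_iff hFne]
      ring
    -- derivative of each integral term (player 2)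
    have h2 : ∀ j : Fin M, HasDerivAt (fun s => ∫ z in (q j)..(g j s), (z - q j) / G j z)
        ((g j s - q j) * (∑ i, u i j * f i s + mu s)) s := by
      intro j
      have hcontOn : ContinuousOn (fun z => (z - q j) / G j z) (J j) :=
        (continuousOn_id.sub continuousOn_const).div (hGc j).continuousOn
          (fun z hz => (hGpos j z hz).ne')
      have hsub : Set.uIcc (q j) (g j s) ⊆ J j :=
        (hJc j).ordConnected.uIcc_subset (hqJ j) (hgJ j s)
      have hint : IntervalIntegrable (fun z => (z - q j) / G j z) MeasureTheory.volume
          (q j) (g j s) := (hcontOn.mono hsub).intervalIntegrable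
      have hmeas : StronglyMeasurableAtFilter (fun z => (z - q j) / G j z)
          (nhds (g j s)) :=
        ((measurable_id.sub measurable_const).div (hGc j).measurable).stronglyMeasurable.stronglyMeasurableAtFilter
      have hcont : ContinuousAt (fun z => (z - q j) / G j z) (g j s) :=
        ContinuousAt.div (continuousAt_id.sub continuousAt_const) (hGc j).continuousAt
          (hGpos j _ (hgJ j s)).ne'
      have hPhi : HasDerivAt (fun x => ∫ z in (q j)..x, (z - q j) / G j z)
          ((g j s - q j) / G j (g j s)) (g j s) :=
        intervalIntegral.integral_hasDerivAt_right hint hmeas hcont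
      have hcomp := HasDerivAt.comp s hPhi (hg j s)
      refine hcomp.congr_deriv ?_
      have hGne : G j (g j s) ≠ 0 := (hGpos j _ (hgJ j s)).ne'
      rw [div_mul_eq_mul_div, div_eq_iff hGne]
      ring
    have hS1 : HasDerivAt (fun s => ∑ i, ∫ z in (p i)..(f i s), (z - p i) / F i z)
        (∑ i, -((f i s - p i) * (∑ j, u i j * g j s + lam s))) s :=
      HasDerivAt.fun_sum (fun i _ => h1 i)
    have hS2 : HasDerivAt (fun s => ∑ j, ∫ z in (q j)..(g j s), (z - q j) / G j z)
        (∑ j, (g j s - q j) * (∑ i, u i j * f i s + mu s)) s :=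
      HasDerivAt.fun_sum (fun j _ => h2 j)
    have hL : HasDerivAt (fun s => (lam s - lamStar) ^ 2 / 2)
        ((lam s - lamStar) * (∑ i, f i s - 1)) s := by
      have h := (((hlam s).sub_const lamStar).pow 2).div_const 2
      refine h.congr_deriv ?_
      norm_num
      ring
    have hMu : HasDerivAt (fun s => (mu s - muStar) ^ 2 / 2)
        ((mu s - muStar) * (-(∑ j, g j s - 1))) s := by
      have h := (((hmu s).sub_const muStar).pow 2).div_const 2
      refine h.congr_deriv ?_
      norm_num
      ring
    have hD : HasDerivAt H
        ((∑ i, -((f i s - p i) * (∑ j, u i j * g j s + lam s))) +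
         (∑ j, (g j s - q j) * (∑ i, u i j * f i s + mu s)) +
         (lam s - lamStar) * (∑ i, f i s - 1) +
         (mu s - muStar) * (-(∑ j, g j s - 1))) s :=
      ((hS1.add hS2).add hL).add hMu
    -- show the derivative is zero
    have hzero :
        ((∑ i, -((f i s - p i) * (∑ j, u i j * g j s + lam s))) +
         (∑ j, (g j s - q j) * (∑ i, u i j * f i s + mu s)) +
         (lam s - lamStar) * (∑ i, f i s - 1) +
         (mu s - muStar) * (-(∑ j, g j s - 1))) = 0 := by
      have e1 : ∑ i, -((f i s - p i) * (∑ j, u i j * g j s + lam s)) =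
          -(∑ i, f i s * (∑ j, u i j * g j s)) +
          (∑ i, p i * (∑ j, u i j * g j s)) + lam s * (1 - ∑ i, f i s) := by
        calc ∑ i, -((f i s - p i) * (∑ j, u i j * g j s + lam s))
            = ∑ i, (-(f i s * (∑ j, u i j * g j s)) + p i * (∑ j, u i j * g j s) +
                lam s * (p i - f i s)) := Finset.sum_congr rfl fun i _ => by ring
          _ = _ := by
              rw [Finset.sum_add_distrib, Finset.sum_add_distrib, Finset.sum_neg_distrib,
                ← Finset.mul_sum, Finset.sum_sub_distrib, hp]
      have e2 : ∑ j, (g j s - q j) * (∑ i, u i j * f i s + mu s) =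
          (∑ j, g j s * (∑ i, u i j * f i s)) -
          (∑ j, q j * (∑ i, u i j * f i s)) + mu s * ((∑ j, g j s) - 1) := by
        calc ∑ j, (g j s - q j) * (∑ i, u i j * f i s + mu s)
            = ∑ j, (g j s * (∑ i, u i j * f i s) - q j * (∑ i, u i j * f i s) +
                mu s * (g j s - q j)) := Finset.sum_congr rfl fun j _ => by ring
          _ = _ := by
              rw [Finset.sum_add_distrib, Finset.sum_sub_distrib, ← Finset.mul_sum,
                Finset.sum_sub_distrib, hq]
      have hX : ∑ i, f i s * (∑ j, u i j * g j s) =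
          ∑ j, g j s * (∑ i, u i j * f i s) := by
        simp_rw [Finset.mul_sum]
        rw [Finset.sum_comm]
        exact Finset.sum_congr rfl fun j _ => Finset.sum_congr rfl fun i _ => by ring
      have hPa : ∑ i, p i * (∑ j, u i j * g j s) = -muStar * ∑ j, g j s := by
        have hw : ∀ j : Fin M, ∑ i, u i j * p i = -muStar := fun j =>
          eq_neg_of_add_eq_zero_left (hKKT2 j)
        calc ∑ i, p i * (∑ j, u i j * g j s) = ∑ i, ∑ j, p i * (u i j * g j s) := by
              simp_rw [Finset.mul_sum]
          _ = ∑ j, ∑ i, p i * (u i j * g j s) := Finset.sum_comm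
          _ = ∑ j, (∑ i, u i j * p i) * g j s := by
              refine Finset.sum_congr rfl fun j _ => ?_
              rw [Finset.sum_mul]
              exact Finset.sum_congr rfl fun i _ => by ring
          _ = ∑ j, (-muStar) * g j s := Finset.sum_congr rfl fun j _ => by rw [hw j]
          _ = -muStar * ∑ j, g j s := by rw [Finset.mul_sum]
      have hQb : ∑ j, q j * (∑ i, u i j * f i s) = -lamStar * ∑ i, f i s := by
        have hv : ∀ i : Fin N, ∑ j, u i j * q j = -lamStar := fun i =>
          eq_neg_of_add_eq_zero_left (hKKT1 i)
        calc ∑ j, q j * (∑ i, u i j * f i s) = ∑ j, ∑ i, q j * (u i j * f i s) := by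
              simp_rw [Finset.mul_sum]
          _ = ∑ i, ∑ j, q j * (u i j * f i s) := Finset.sum_comm
          _ = ∑ i, (∑ j, u i j * q j) * f i s := by
              refine Finset.sum_congr rfl fun i _ => ?_
              rw [Finset.sum_mul]
              exact Finset.sum_congr rfl fun j _ => by ring
          _ = ∑ i, (-lamStar) * f i s := Finset.sum_congr rfl fun i _ => by rw [hv i]
          _ = -lamStar * ∑ i, f i s := by rw [Finset.mul_sum]
      rw [e1, e2]
      linear_combination (-1 : ℝ) * hX + hPa - hQb + hlm
    rw [hzero] at hD
    exact hD
  intro t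
  have hdiff : Differentiable ℝ H := fun s => (key s).differentiableAt
  have hconst := is_const_of_deriv_eq_zero hdiff (fun s => (key s).deriv) t 0
  simpa [hH] using hconst
end

section
/- Let σ : ℝ → ℝ be the logistic sigmoid σ(x) = 1/(1 + e^{-x}) and let p ∈ (0, 1). Then the function h : ℝ → ℝ defined by h(θ) = ∫_p^{σ(θ)} (z - p)/(z² (1 - z)²) dz is convex on ℝ. -/
open intervalIntegral

/-- For the logistic sigmoid `σ` and `p ∈ (0,1)`, the function
`θ ↦ ∫_p^{σ θ} (z-p)/(z²(1-z)²) dz` is convex on `ℝ`. -/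
theorem stmt_13 (σ : ℝ → ℝ) (hσ : ∀ x : ℝ, σ x = (1 + Real.exp (-x))⁻¹)
    (p : ℝ) (hp : p ∈ Set.Ioo (0:ℝ) 1) :
    ConvexOn ℝ Set.univ
      (fun θ : ℝ => ∫ z in p..(σ θ), (z - p) / (z ^ 2 * (1 - z) ^ 2)) := by
  obtain ⟨hp0, hp1⟩ := hp
  set F : ℝ → ℝ := fun z =>
    (1 - 2*p) * Real.log z + p * z⁻¹ + (2*p - 1) * Real.log (1 - z) + (1 - p) * (1 - z)⁻¹
    with hFdef
  -- derivative of the antiderivative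
  have hderiv : ∀ z ∈ Set.Ioo (0:ℝ) 1,
      HasDerivAt F ((z - p) / (z ^ 2 * (1 - z) ^ 2)) z := by
    rintro z ⟨hz0, hz1⟩
    have hz0' : z ≠ 0 := ne_of_gt hz0
    have hz1' : (1 - z) ≠ 0 := by linarith
    have hsub : HasDerivAt (fun z : ℝ => 1 - z) (-1) z := (hasDerivAt_id z).const_sub 1
    have h1 : HasDerivAt (fun z : ℝ => Real.log z) z⁻¹ z := Real.hasDerivAt_log hz0'
    have h2 : HasDerivAt (fun z : ℝ => z⁻¹) (-(z^2)⁻¹) z := hasDerivAt_inv hz0'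
    have h3 : HasDerivAt (fun z : ℝ => Real.log (1 - z)) ((1 - z)⁻¹ * (-1)) z :=
      (Real.hasDerivAt_log hz1').comp z hsub
    have h4 : HasDerivAt (fun z : ℝ => (1 - z)⁻¹) (-((1 - z)^2)⁻¹ * (-1)) z :=
      (hasDerivAt_inv hz1').comp z hsub
    have hsum := (((h1.const_mul (1 - 2*p)).add (h2.const_mul p)).add
      (h3.const_mul (2*p - 1))).add (h4.const_mul (1 - p))
    convert hsum using 1
    · rfl
    · rfl
    · rfl
    field_simp
    ring
  -- closed form for the integral
  have key : ∀ θ : ℝ,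
      (∫ z in p..(σ θ), (z - p) / (z ^ 2 * (1 - z) ^ 2))
        = p * Real.exp (-θ) + (1 - p) * Real.exp θ + ((1 - 2*p) * θ + (1 - F p)) := by
    intro θ
    have hE : (0:ℝ) < Real.exp (-θ) := Real.exp_pos _
    have hE1 : (0:ℝ) < 1 + Real.exp (-θ) := by linarith
    have hsθ : σ θ = (1 + Real.exp (-θ))⁻¹ := hσ θ
    have hs0 : 0 < σ θ := by rw [hsθ]; positivity
    have hs1 : σ θ < 1 := by
      rw [hsθ]
      rw [inv_lt_one_iff₀]
      right; linarith
    have hmem : σ θ ∈ Set.Ioo (0:ℝ) 1 := ⟨hs0, hs1⟩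
    have hsubset : Set.uIcc p (σ θ) ⊆ Set.Ioo (0:ℝ) 1 :=
      (Set.ordConnected_Ioo).uIcc_subset ⟨hp0, hp1⟩ hmem
    have hcont : ContinuousOn (fun z : ℝ => (z - p) / (z ^ 2 * (1 - z) ^ 2))
        (Set.uIcc p (σ θ)) := by
      apply ContinuousOn.div (by fun_prop) (by fun_prop)
      intro z hz
      obtain ⟨hz0, hz1⟩ := hsubset hz
      have : (1:ℝ) - z ≠ 0 := by linarith
      positivity
    have hint : IntervalIntegrable (fun z : ℝ => (z - p) / (z ^ 2 * (1 - z) ^ 2))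
        MeasureTheory.volume p (σ θ) := hcont.intervalIntegrable
    have heval := intervalIntegral.integral_eq_sub_of_hasDerivAt
      (fun z hz => hderiv z (hsubset hz)) hint
    rw [heval]
    -- now compute F (σ θ)
    have h1s : 1 - σ θ = Real.exp (-θ) / (1 + Real.exp (-θ)) := by
      rw [hsθ]; field_simp; ring
    have hlogs : Real.log (σ θ) = -Real.log (1 + Real.exp (-θ)) := by
      rw [hsθ, Real.log_inv]
    have hlog1s : Real.log (1 - σ θ) = -θ - Real.log (1 + Real.exp (-θ)) := by
      rw [h1s, Real.log_div (ne_of_gt hE) (ne_of_gt hE1), Real.log_exp]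
    have hsinv : (σ θ)⁻¹ = 1 + Real.exp (-θ) := by rw [hsθ, inv_inv]
    have hEE : Real.exp (-θ) * Real.exp θ = 1 := by
      rw [← Real.exp_add]; simp
    have h1sinv : (1 - σ θ)⁻¹ = 1 + Real.exp θ := by
      rw [h1s]
      rw [inv_div]
      rw [eq_comm, eq_div_iff (ne_of_gt hE)]
      nlinarith [hEE]
    have : F (σ θ) = (1 - 2*p) * θ + p * (1 + Real.exp (-θ)) + (1 - p) * (1 + Real.exp θ) := by
      rw [hFdef]
      simp only
      rw [hlogs, hlog1s, hsinv, h1sinv]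
      ring
    rw [this]; ring
  have hfun : (fun θ : ℝ => ∫ z in p..(σ θ), (z - p) / (z ^ 2 * (1 - z) ^ 2))
      = fun θ : ℝ => p * Real.exp (-θ) + (1 - p) * Real.exp θ + ((1 - 2*p) * θ + (1 - F p)) :=
    funext key
  rw [hfun]
  -- convexity of the closed form
  have c1 : ConvexOn ℝ Set.univ (fun θ : ℝ => Real.exp (-θ)) := by
    refine ⟨convex_univ, fun x _ y _ a b ha hb hab => ?_⟩
    have h := convexOn_exp.2 (Set.mem_univ (-x)) (Set.mem_univ (-y)) ha hb hab
    simp only [smul_eq_mul, mul_neg] at h ⊢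
    convert h using 2
    ring
  have c2 : ConvexOn ℝ Set.univ (fun θ : ℝ => Real.exp θ) := convexOn_exp
  have caff : ConvexOn ℝ Set.univ (fun θ : ℝ => (1 - 2*p) * θ + (1 - F p)) := by
    refine ⟨convex_univ, fun x _ y _ a b ha hb hab => ?_⟩
    simp only [smul_eq_mul]
    apply le_of_eq
    linear_combination (F p - 1) * hab
  have := ((c1.smul hp0.le).add (c2.smul (by linarith : (0:ℝ) ≤ 1 - p))).add caff
  exact this
end

section
/- Let σ(x) = 1/(1 + e^{-x}) be the logistic sigmoid, u an N×M real matrix, p ∈ (0,1)^N and q ∈ (0,1)^M with ∑_i p_i = 1, ∑_j q_j = 1, and λ*, μ* ∈ ℝ with ∑_{j} u_{ij} q_j + λ* = 0 for all i and ∑_{i} u_{ij} p_i + μ* = 0 for all j. Define H(θ, φ, λ, μ) = ∑_{i=1}^N ∫_{p_i}^{σ(θ_i)} (z - p_i)/(z²(1-z)²) dz + ∑_{j=1}^M ∫_{q_j}^{σ(φ_j)} (z - q_j)/(z²(1-z)²) dz + (λ - λ*)²/2 + (μ - μ*)²/2 for (θ, φ, λ, μ) ∈ ℝ^N × ℝ^M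 × ℝ × ℝ. For α ≥ 0 let the discrete GDA update be θ_i⁺ = θ_i - α σ'(θ_i)(∑_j u_{ij} σ(φ_j) + λ), φ_j⁺ = φ_j + α σ'(φ_j)(∑_i u_{ij} σ(θ_i) + μ), λ⁺ = λ + α(∑_i σ(θ_i) - 1), μ⁺ = μ - α(∑_j σ(φ_j) - 1). Then H(θ⁺, φ⁺, λ⁺, μ⁺) ≥ H(θ, φ, λ, μ) for every (θ, φ, λ, μ). -/
open intervalIntegral

lemma sig_mem (x : ℝ) : (1 + Real.exp (-x))⁻¹ ∈ Set.Ioo (0:ℝ) 1 := by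
  have h := Real.exp_pos (-x)
  constructor
  · positivity
  · rw [inv_lt_one_iff₀]; right; linarith

lemma sig_hasDerivAt (σ : ℝ → ℝ) (hσ : ∀ x, σ x = (1 + Real.exp (-x))⁻¹) (x : ℝ) :
    HasDerivAt σ (σ x * (1 - σ x)) x := by
  have h1 : HasDerivAt (fun y : ℝ => 1 + Real.exp (-y)) (-Real.exp (-x)) x := by
    have := (Real.hasDerivAt_exp (-x)).comp x ((hasDerivAt_id x).neg)
    simpa using this.const_add 1
  have hne : (1 : ℝ) + Real.exp (-x) ≠ 0 := by positivity
  have h2 := h1.inv hne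
  have hfun : σ = fun y : ℝ => (1 + Real.exp (-y))⁻¹ := funext hσ
  rw [hfun]
  refine h2.congr_deriv ?_
  beta_reduce
  field_simp
  ring

lemma sig_mono (σ : ℝ → ℝ) (hσ : ∀ x, σ x = (1 + Real.exp (-x))⁻¹) : Monotone σ := by
  intro x y hxy
  rw [hσ, hσ]
  have h1 : (0:ℝ) < 1 + Real.exp (-x) := by positivity
  have h2 : (0:ℝ) < 1 + Real.exp (-y) := by positivity
  apply inv_anti₀ h2
  have := Real.exp_le_exp.2 (neg_le_neg hxy)
  linarith

lemma h_intble (p a b : ℝ) (ha : a ∈ Set.Ioo (0:ℝ) 1) (hb : b ∈ Set.Ioo (0:ℝ) 1) :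
    IntervalIntegrable (fun z => (z - p) / (z ^ 2 * (1 - z) ^ 2)) MeasureTheory.volume a b := by
  apply ContinuousOn.intervalIntegrable
  have hsub : Set.uIcc a b ⊆ Set.Ioo (0:ℝ) 1 := Set.ordConnected_Ioo.uIcc_subset ha hb
  apply ContinuousOn.div (by fun_prop) (by fun_prop)
  intro z hz
  have hz' := hsub hz
  have h1 : (0:ℝ) < 1 - z := by linarith [hz'.2]
  have h0 := hz'.1
  have : (0:ℝ) < z ^ 2 * (1 - z) ^ 2 := by positivity
  exact ne_of_gt this

lemma g_mono (p : ℝ) (hp : p ∈ Set.Ioo (0:ℝ) 1) {s s' : ℝ}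
    (hs : s ∈ Set.Ioo (0:ℝ) 1) (hs' : s' ∈ Set.Ioo (0:ℝ) 1) (hss' : s ≤ s') :
    (s - p) / (s * (1 - s)) ≤ (s' - p) / (s' * (1 - s')) := by
  have hd : (0:ℝ) < s * (1 - s) := by
    have := hs.1; have : (0:ℝ) < 1 - s := by linarith [hs.2]
    exact mul_pos hs.1 this
  have hd' : (0:ℝ) < s' * (1 - s') := by
    have : (0:ℝ) < 1 - s' := by linarith [hs'.2]
    exact mul_pos hs'.1 this
  rw [div_le_div_iff₀ hd hd']
  nlinarith [mul_nonneg (sub_nonneg.2 hss')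
      (mul_nonneg (mul_nonneg hp.1.le (by linarith [hs.2] : (0:ℝ) ≤ 1 - s))
        (by linarith [hs'.2] : (0:ℝ) ≤ 1 - s')),
    mul_nonneg (sub_nonneg.2 hss')
      (mul_nonneg (mul_nonneg (by linarith [hp.2] : (0:ℝ) ≤ 1 - p) hs.1.le) hs'.1.le)]

lemma key_ineq (σ : ℝ → ℝ) (hσ : ∀ x, σ x = (1 + Real.exp (-x))⁻¹)
    (p : ℝ) (hp : p ∈ Set.Ioo (0:ℝ) 1) (x x' : ℝ) :
    (∫ z in p..(σ x), (z - p) / (z ^ 2 * (1 - z) ^ 2)) +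
      (σ x - p) / (σ x * (1 - σ x)) * (x' - x)
      ≤ ∫ z in p..(σ x'), (z - p) / (z ^ 2 * (1 - z) ^ 2) := by
  have hmem : ∀ y, σ y ∈ Set.Ioo (0:ℝ) 1 := fun y => by rw [hσ]; exact sig_mem y
  have hDpos : ∀ y, (0:ℝ) < σ y * (1 - σ y) := fun y => by
    have h1 := (hmem y).1; have h2 := (hmem y).2
    have : (0:ℝ) < 1 - σ y := by linarith
    exact mul_pos h1 this
  have hσcont : Continuous σ :=
    continuous_iff_continuousAt.2 fun y => (sig_hasDerivAt σ hσ y).continuousAt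
  have hsplit := integral_add_adjacent_intervals
    (h_intble p p (σ x) hp (hmem x)) (h_intble p (σ x) (σ x') (hmem x) (hmem x'))
  rw [← hsplit]
  have hmain : (σ x - p) / (σ x * (1 - σ x)) * (x' - x)
      ≤ ∫ z in (σ x)..(σ x'), (z - p) / (z ^ 2 * (1 - z) ^ 2) := by
    set G : ℝ → ℝ := fun w => (σ w - p) / (σ w * (1 - σ w)) with hG
    have hGcont : Continuous G :=
      Continuous.div (hσcont.sub continuous_const)
        ((hσcont.mul (continuous_const.sub hσcont))) fun y => (hDpos y).ne'
    have hcov : (∫ z in (σ x)..(σ x'), (z - p) / (z ^ 2 * (1 - z) ^ 2))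
        = ∫ w in x..x', G w := by
      rw [← integral_comp_smul_deriv' (f := σ) (f' := fun w => σ w * (1 - σ w))
        (g := fun z => (z - p) / (z ^ 2 * (1 - z) ^ 2))
        (fun w _ => sig_hasDerivAt σ hσ w)
        ((hσcont.mul (continuous_const.sub hσcont)).continuousOn)
        ?_]
      · apply integral_congr
        intro w _
        have h1 := (hmem w).1
        have h2 : (0:ℝ) < 1 - σ w := by linarith [(hmem w).2]
        simp only [hG, smul_eq_mul, Function.comp]
        field_simp
      · apply ContinuousOn.div (by fun_prop) (by fun_prop)
        intro z hz
        obtain ⟨w, _, rfl⟩ := hz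
        have h1 := (hmem w).1
        have h2 : (0:ℝ) < 1 - σ w := by linarith [(hmem w).2]
        have : (0:ℝ) < σ w ^ 2 * (1 - σ w) ^ 2 := by positivity
        exact this.ne'
    rw [hcov]
    have hGmono : Monotone G := fun w w' hww' =>
      g_mono p hp (hmem w) (hmem w') (sig_mono σ hσ hww')
    rcases le_total x x' with hxx' | hxx'
    · have hmono : ∀ w ∈ Set.Icc x x', G x ≤ G w := fun w hw => hGmono hw.1
      have := integral_mono_on hxx' (_root_.intervalIntegrable_const (c := G x) (μ := MeasureTheory.volume))
        (hGcont.intervalIntegrable x x') hmono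
      rw [integral_const, smul_eq_mul] at this
      linarith [this]
    · have hmono : ∀ w ∈ Set.Icc x' x, G w ≤ G x := fun w hw => hGmono hw.2
      have := integral_mono_on hxx' (hGcont.intervalIntegrable x' x)
        (_root_.intervalIntegrable_const (c := G x) (μ := MeasureTheory.volume)) hmono
      rw [integral_const, smul_eq_mul, integral_symm x x'] at *
      linarith [this]
  linarith [hmain]
/-- For the hidden bilinear game with sigmoid activations, the energy
`H` is non-decreasing along one step of discrete-time gradient-descent-ascent with
learning rate `α ≥ 0`. -/
theorem stmt_14 {N M : ℕ} (σ : ℝ → ℝ) (hσ : ∀ x : ℝ, σ x = (1 + Real.exp (-x))⁻¹)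
    (u : Matrix (Fin N) (Fin M) ℝ)
    (p : Fin N → ℝ) (q : Fin M → ℝ)
    (hp01 : ∀ i, p i ∈ Set.Ioo (0:ℝ) 1) (hq01 : ∀ j, q j ∈ Set.Ioo (0:ℝ) 1)
    (hp : ∑ i, p i = 1) (hq : ∑ j, q j = 1)
    (lamStar muStar : ℝ)
    (hKKT1 : ∀ i, ∑ j, u i j * q j + lamStar = 0)
    (hKKT2 : ∀ j, ∑ i, u i j * p i + muStar = 0)
    (H : (Fin N → ℝ) → (Fin M → ℝ) → ℝ → ℝ → ℝ)
    (hH : ∀ (θ : Fin N → ℝ) (φ : Fin M → ℝ) (lam mu : ℝ),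
      H θ φ lam mu =
        (∑ i, ∫ z in (p i)..(σ (θ i)), (z - p i) / (z ^ 2 * (1 - z) ^ 2)) +
        (∑ j, ∫ z in (q j)..(σ (φ j)), (z - q j) / (z ^ 2 * (1 - z) ^ 2)) +
        (lam - lamStar) ^ 2 / 2 + (mu - muStar) ^ 2 / 2)
    (α : ℝ) (hα : 0 ≤ α)
    (θ : Fin N → ℝ) (φ : Fin M → ℝ) (lam mu : ℝ) :
    H θ φ lam mu ≤
      H (fun i => θ i - α * deriv σ (θ i) * (∑ j, u i j * σ (φ j) + lam))
        (fun j => φ j + α * deriv σ (φ j) * (∑ i, u i j * σ (θ i) + mu))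
        (lam + α * (∑ i, σ (θ i) - 1))
        (mu - α * (∑ j, σ (φ j) - 1)) := by
  have hmem : ∀ y, σ y ∈ Set.Ioo (0:ℝ) 1 := fun y => by rw [hσ]; exact sig_mem y
  have hDpos : ∀ y, (0:ℝ) < σ y * (1 - σ y) := fun y => by
    have h1 := (hmem y).1; have h2 := (hmem y).2
    have : (0:ℝ) < 1 - σ y := by linarith
    exact mul_pos h1 this
  have hder : ∀ y, deriv σ y = σ y * (1 - σ y) := fun y => (sig_hasDerivAt σ hσ y).deriv
  -- lamStar = muStar
  have hswap : ∀ (a : Fin N → ℝ) (b : Fin M → ℝ),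
      ∑ i, a i * (∑ j, u i j * b j) = ∑ j, b j * (∑ i, u i j * a i) := by
    intro a b
    simp only [Finset.mul_sum]
    rw [Finset.sum_comm]
    exact Finset.sum_congr rfl fun j _ => Finset.sum_congr rfl fun i _ => by ring
  have h1 : ∑ i, p i * (∑ j, u i j * q j) = -lamStar := by
    rw [Finset.sum_congr rfl fun i _ => by
      rw [show (∑ j, u i j * q j) = -lamStar by linarith [hKKT1 i]]]
    rw [← Finset.sum_mul, hp, one_mul]
  have h2 : ∑ i, p i * (∑ j, u i j * q j) = -muStar := by
    rw [hswap p q]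
    rw [Finset.sum_congr rfl fun j _ => by
      rw [show (∑ i, u i j * p i) = -muStar by linarith [hKKT2 j]]]
    rw [← Finset.sum_mul, hq, one_mul]
  have hlm : lamStar = muStar := by linarith [h1, h2]
  -- the identity
  have hP : ∑ i, p i * (∑ j, u i j * σ (φ j)) = -muStar * (∑ j, σ (φ j)) := by
    rw [hswap p (fun j => σ (φ j))]
    rw [Finset.sum_congr rfl fun j _ => by
      rw [show (∑ i, u i j * p i) = -muStar by linarith [hKKT2 j]]]
    rw [← Finset.sum_mul]; ring
  have hQ : ∑ j, q j * (∑ i, u i j * σ (θ i)) = -lamStar * (∑ i, σ (θ i)) := by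
    rw [show (∑ j, q j * (∑ i, u i j * σ (θ i)))
        = ∑ i, σ (θ i) * (∑ j, u i j * q j) from (hswap (fun i => σ (θ i)) q).symm]
    rw [Finset.sum_congr rfl fun i _ => by
      rw [show (∑ j, u i j * q j) = -lamStar by linarith [hKKT1 i]]]
    rw [← Finset.sum_mul]; ring
  have hX : ∑ i, (σ (θ i) - p i) * (∑ j, u i j * σ (φ j) + lam)
      = (∑ i, σ (θ i) * (∑ j, u i j * σ (φ j))) + muStar * (∑ j, σ (φ j))
        + ((∑ i, σ (θ i)) - 1) * lam := by
    rw [Finset.sum_congr rfl fun i _ => show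
      (σ (θ i) - p i) * (∑ j, u i j * σ (φ j) + lam)
        = σ (θ i) * (∑ j, u i j * σ (φ j)) - p i * (∑ j, u i j * σ (φ j))
          + (σ (θ i) - p i) * lam from by ring]
    rw [Finset.sum_add_distrib, Finset.sum_sub_distrib, hP, ← Finset.sum_mul,
      Finset.sum_sub_distrib, hp]
    ring
  have hY : ∑ j, (σ (φ j) - q j) * (∑ i, u i j * σ (θ i) + mu)
      = (∑ i, σ (θ i) * (∑ j, u i j * σ (φ j))) + lamStar * (∑ i, σ (θ i))
        + ((∑ j, σ (φ j)) - 1) * mu := by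
    rw [Finset.sum_congr rfl fun j _ => show
      (σ (φ j) - q j) * (∑ i, u i j * σ (θ i) + mu)
        = σ (φ j) * (∑ i, u i j * σ (θ i)) - q j * (∑ i, u i j * σ (θ i))
          + (σ (φ j) - q j) * mu from by ring]
    rw [Finset.sum_add_distrib, Finset.sum_sub_distrib, hQ, ← Finset.sum_mul,
      Finset.sum_sub_distrib, hq, ← hswap (fun i => σ (θ i)) (fun j => σ (φ j))]
    ring
  have hzero : (∑ j, (σ (φ j) - q j) * (∑ i, u i j * σ (θ i) + mu))
      - (∑ i, (σ (θ i) - p i) * (∑ j, u i j * σ (φ j) + lam))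
      = (mu - muStar) * ((∑ j, σ (φ j)) - 1) - (lam - lamStar) * ((∑ i, σ (θ i)) - 1) := by
    rw [hX, hY]; linear_combination hlm
  -- per-coordinate inequalities
  have hkey1 : ∀ i ∈ Finset.univ, (∫ z in (p i)..(σ (θ i)), (z - p i) / (z ^ 2 * (1 - z) ^ 2))
      - α * ((σ (θ i) - p i) * (∑ j, u i j * σ (φ j) + lam))
      ≤ ∫ z in (p i)..(σ (θ i - α * deriv σ (θ i) * (∑ j, u i j * σ (φ j) + lam))),
          (z - p i) / (z ^ 2 * (1 - z) ^ 2) := by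
    intro i _
    have h := key_ineq σ hσ (p i) (hp01 i) (θ i)
      (θ i - α * deriv σ (θ i) * (∑ j, u i j * σ (φ j) + lam))
    have hD := (hDpos (θ i)).ne'
    have heq : (σ (θ i) - p i) / (σ (θ i) * (1 - σ (θ i)))
        * ((θ i - α * deriv σ (θ i) * (∑ j, u i j * σ (φ j) + lam)) - θ i)
        = -(α * ((σ (θ i) - p i) * (∑ j, u i j * σ (φ j) + lam))) := by
      rw [hder]
      rw [div_mul_eq_mul_div, div_eq_iff hD]
      ring
    linarith [h, heq.le, heq.ge]
  have hkey2 : ∀ j ∈ Finset.univ, (∫ z in (q j)..(σ (φ j)), (z - q j) / (z ^ 2 * (1 - z) ^ 2))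
      + α * ((σ (φ j) - q j) * (∑ i, u i j * σ (θ i) + mu))
      ≤ ∫ z in (q j)..(σ (φ j + α * deriv σ (φ j) * (∑ i, u i j * σ (θ i) + mu))),
          (z - q j) / (z ^ 2 * (1 - z) ^ 2) := by
    intro j _
    have h := key_ineq σ hσ (q j) (hq01 j) (φ j)
      (φ j + α * deriv σ (φ j) * (∑ i, u i j * σ (θ i) + mu))
    have hD := (hDpos (φ j)).ne'
    have heq : (σ (φ j) - q j) / (σ (φ j) * (1 - σ (φ j)))
        * ((φ j + α * deriv σ (φ j) * (∑ i, u i j * σ (θ i) + mu)) - φ j)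
        = α * ((σ (φ j) - q j) * (∑ i, u i j * σ (θ i) + mu)) := by
      rw [hder]
      rw [div_mul_eq_mul_div, div_eq_iff hD]
      ring
    linarith [h, heq.le, heq.ge]
  have hB1 := Finset.sum_le_sum hkey1
  have hB2 := Finset.sum_le_sum hkey2
  rw [Finset.sum_sub_distrib, ← Finset.mul_sum] at hB1
  rw [Finset.sum_add_distrib, ← Finset.mul_sum] at hB2
  have hB3 : (lam - lamStar) ^ 2 / 2 + α * ((lam - lamStar) * ((∑ i, σ (θ i)) - 1))
      ≤ (lam + α * ((∑ i, σ (θ i)) - 1) - lamStar) ^ 2 / 2 := by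
    nlinarith [sq_nonneg (α * ((∑ i, σ (θ i)) - 1))]
  have hB4 : (mu - muStar) ^ 2 / 2 - α * ((mu - muStar) * ((∑ j, σ (φ j)) - 1))
      ≤ (mu - α * ((∑ j, σ (φ j)) - 1) - muStar) ^ 2 / 2 := by
    nlinarith [sq_nonneg (α * ((∑ j, σ (φ j)) - 1))]
  have hz : α * ((∑ j, (σ (φ j) - q j) * (∑ i, u i j * σ (θ i) + mu)))
      - α * ((∑ i, (σ (θ i) - p i) * (∑ j, u i j * σ (φ j) + lam)))
      + α * ((lam - lamStar) * ((∑ i, σ (θ i)) - 1))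
      - α * ((mu - muStar) * ((∑ j, σ (φ j)) - 1)) = 0 := by
    linear_combination α * hzero
  simp only [hH]
  linarith [hB1, hB2, hB3, hB4, hz]
end

section
/- Let u₀₀, u₀₁, u₁₀, u₁₁ ∈ ℝ with v = u₀₀ - u₀₁ - u₁₀ + u₁₁ ≠ 0, and let q = -(u₀₁ - u₁₁)/v ∈ (0,1) and p = -(u₁₀ - u₁₁)/v ∈ (0,1). Then there exist a learning rate α > 0, C² functions f, g : ℝ → ℝ, a point (θ*, φ*) ∈ ℝ² with f'(θ*) = 0, g'(φ*) = 0 and (f(θ*), g(φ*)) ≠ (p, q), and a Lebesgue measurable set S ⊆ ℝ² of positive Lebesgue measure, such that for every (θ₀, φ₀) ∈ S the iterates of the discrete GDA map T(θ, φ) = (θ - α v f'(θ)(g(φ) - q), φ + α v g'(φ)(f(θ) - p)) starting from (θ₀, φ₀) converge to (θ*, φ*) as the number of iterations tends to infinity. -/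
open Filter MeasureTheory

set_option maxHeartbeats 1000000 in
/-- There exist a learning rate `α > 0`, `C²` functions `f, g`, a
spurious fixed point `(θ*, φ*)` and a positive-measure set of initial conditions from
which the iterates of the discrete GDA map converge to `(θ*, φ*)`. -/
theorem stmt_16 (u₀₀ u₀₁ u₁₀ u₁₁ : ℝ) (v p q : ℝ)
    (hv : v = u₀₀ - u₀₁ - u₁₀ + u₁₁) (hv0 : v ≠ 0)
    (hq : q = -(u₀₁ - u₁₁) / v) (hp : p = -(u₁₀ - u₁₁) / v)
    (hp01 : p ∈ Set.Ioo (0:ℝ) 1) (hq01 : q ∈ Set.Ioo (0:ℝ) 1) :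
    ∃ α : ℝ, 0 < α ∧
    ∃ f g : ℝ → ℝ, ContDiff ℝ 2 f ∧ ContDiff ℝ 2 g ∧
    ∃ θstar φstar : ℝ,
      deriv f θstar = 0 ∧ deriv g φstar = 0 ∧ (f θstar, g φstar) ≠ (p, q) ∧
      ∃ S : Set (ℝ × ℝ), MeasurableSet S ∧ 0 < volume S ∧
        ∀ θ₀ φ₀ : ℝ, (θ₀, φ₀) ∈ S →
          Tendsto
            (fun k : ℕ =>
              (fun x : ℝ × ℝ =>
                (x.1 - α * v * deriv f x.1 * (g x.2 - q),
                 x.2 + α * v * deriv g x.2 * (f x.1 - p)))^[k] (θ₀, φ₀))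
            atTop (nhds (θstar, φstar)) := by
  have hv2 : (0:ℝ) < v ^ 2 := by positivity
  have hvabs : (0:ℝ) < |v| := abs_pos.mpr hv0
  set f : ℝ → ℝ := fun θ => p + 1 + v * θ ^ 2 / 2 with hf
  set g : ℝ → ℝ := fun φ => q + 1 - v * φ ^ 2 / 2 with hg
  have hdf : ∀ θ : ℝ, deriv f θ = v * θ := by
    intro θ
    have h : HasDerivAt f (v * (↑2 * θ ^ 1) / 2) θ :=
      (((hasDerivAt_pow 2 θ).const_mul v).div_const 2).const_add (p + 1)
    rw [h.deriv]; push_cast; ring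
  have hdg : ∀ φ : ℝ, deriv g φ = -(v * φ) := by
    intro φ
    have h : HasDerivAt g (0 - v * (↑2 * φ ^ 1) / 2) φ :=
      (hasDerivAt_const φ (q + 1)).sub (((hasDerivAt_pow 2 φ).const_mul v).div_const 2)
    rw [h.deriv]; push_cast; ring
  set ε : ℝ := min 1 (1 / |v|) with hε
  have hε0 : 0 < ε := lt_min one_pos (by positivity)
  have hεv : |v| * ε ^ 2 ≤ 1 := by
    have h1 : ε ≤ 1 := min_le_left _ _
    have h2 : ε ≤ 1 / |v| := min_le_right _ _
    have h3 : ε * |v| ≤ 1 := (le_div_iff₀ hvabs).mp h2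
    nlinarith [hε0.le, hvabs.le]
  refine ⟨1 / v ^ 2, by positivity, f, g, ?_, ?_, 0, 0, ?_, ?_, ?_,
    Set.Ioo (-ε) ε ×ˢ Set.Ioo (-ε) ε, (measurableSet_Ioo.prod measurableSet_Ioo), ?_, ?_⟩
  · exact contDiff_const.add ((contDiff_const.mul (contDiff_id.pow 2)).div_const 2)
  · exact contDiff_const.sub ((contDiff_const.mul (contDiff_id.pow 2)).div_const 2)
  · rw [hdf]; ring
  · rw [hdg]; ring
  · simp only [hf, Prod.mk.injEq, not_and]
    intro h; exfalso; norm_num at h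
  · refine ((isOpen_Ioo.prod isOpen_Ioo).measure_pos volume ⟨(0, 0), ?_⟩)
    simp only [Set.mem_prod, Set.mem_Ioo]
    refine ⟨⟨by linarith, hε0⟩, by linarith, hε0⟩
  · intro θ₀ φ₀ hmem
    -- the map simplifies to F
    set T : ℝ × ℝ → ℝ × ℝ := fun x : ℝ × ℝ =>
      (x.1 - 1 / v ^ 2 * v * deriv f x.1 * (g x.2 - q),
       x.2 + 1 / v ^ 2 * v * deriv g x.2 * (f x.1 - p)) with hT
    have hTeq : ∀ x : ℝ × ℝ, T x = (x.1 * (v * x.2 ^ 2 / 2), -(x.2 * (v * x.1 ^ 2 / 2))) := by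
      intro x
      simp only [hT, hdf, hdg]
      simp only [hf, hg, Prod.mk.injEq]
      constructor <;> (field_simp; ring)
    -- key bound
    have key : ∀ k : ℕ, |(T^[k] (θ₀, φ₀)).1| ≤ ε * (1/2) ^ k ∧
        |(T^[k] (θ₀, φ₀)).2| ≤ ε * (1/2) ^ k := by
      intro k
      induction k with
      | zero =>
        obtain ⟨⟨h1, h2⟩, h3, h4⟩ := hmem
        simp only [Function.iterate_zero, id_eq, pow_zero, mul_one]
        exact ⟨(abs_le.mpr ⟨by linarith, by linarith⟩), abs_le.mpr ⟨by linarith, by linarith⟩⟩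
      | succ n ih =>
        obtain ⟨ih1, ih2⟩ := ih
        rw [Function.iterate_succ_apply', hTeq]
        set z := T^[n] (θ₀, φ₀) with hz
        clear_value z
        obtain ⟨a, b⟩ := z
        dsimp only at ih1 ih2 ⊢
        have hεk : ε * (1/2) ^ n ≤ ε := by
          nlinarith [pow_le_one₀ (by norm_num : (0:ℝ) ≤ 1/2) (by norm_num : (1:ℝ)/2 ≤ 1) (n := n)]
        have ha : |a| ≤ ε := ih1.trans hεk
        have hb : |b| ≤ ε := ih2.trans hεk
        have hb2 : b ^ 2 ≤ ε ^ 2 := by nlinarith [abs_nonneg b, sq_abs b, neg_abs_le b, le_abs_self b]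
        have ha2 : a ^ 2 ≤ ε ^ 2 := by nlinarith [abs_nonneg a, sq_abs a, neg_abs_le a, le_abs_self a]
        constructor
        · show |a * (v * b ^ 2 / 2)| ≤ ε * (1/2)^(n+1)
          rw [abs_mul, abs_div, abs_mul, abs_two, abs_pow]
          have : |v| * |b| ^ 2 / 2 ≤ 1 / 2 := by
            have : |v| * |b| ^ 2 ≤ 1 := by nlinarith [hb2, hεv, abs_nonneg v, sq_abs b]
            linarith
          calc |a| * (|v| * |b| ^ 2 / 2) ≤ (ε * (1/2)^n) * (1/2) := by
                apply mul_le_mul ih1 this (by positivity) (by positivity)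
            _ = ε * (1/2)^(n+1) := by ring
        · show |-(b * (v * a ^ 2 / 2))| ≤ ε * (1/2)^(n+1)
          rw [abs_neg, abs_mul, abs_div, abs_mul, abs_two, abs_pow]
          have : |v| * |a| ^ 2 / 2 ≤ 1 / 2 := by
            have : |v| * |a| ^ 2 ≤ 1 := by nlinarith [ha2, hεv, abs_nonneg v, sq_abs a]
            linarith
          calc |b| * (|v| * |a| ^ 2 / 2) ≤ (ε * (1/2)^n) * (1/2) := by
                apply mul_le_mul ih2 this (by positivity) (by positivity)
            _ = ε * (1/2)^(n+1) := by ring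
    -- conclude convergence
    have hbound : Tendsto (fun k : ℕ => ε * (1/2:ℝ) ^ k) atTop (nhds (ε * 0)) :=
      (tendsto_pow_atTop_nhds_zero_of_lt_one (r := (1/2:ℝ)) (by norm_num) (by norm_num)).const_mul ε
    rw [mul_zero] at hbound
    rw [tendsto_iff_dist_tendsto_zero]
    apply squeeze_zero (fun k => dist_nonneg) _ hbound
    intro k
    rw [Prod.dist_eq]
    apply max_le
    · rw [Real.dist_eq, sub_zero]; exact (key k).1
    · rw [Real.dist_eq, sub_zero]; exact (key k).2
end
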